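/- Let A be a finite type and n ≥ 2. For distinct coordinates i, j : Fin n, distinct symbols a, b ∈ A, and a function w assigning a symbol to every coordinate outside {i, j}, the controlled letter transposition determined by (i, j, a, b, w) is the permutation of words of length n that exchanges the word x with x(i) = a, x(j) = b, and x(k) = w(k) for all k ∉ {i,j} with the word y with y(i) = b, y(j) = a, and y(k) = w(k) for all k ∉ {i,j}, and fixes all other words. Then the subgroup of Perm(Fin n → A) generated by all controlled letter transpositions equals the group of all conservative permutations of (Fin n → A). -/

import Mathlib

/-- The weight of a word `x : Fin n → A` is the multiset of its entries. -/
def wordWeight {A : Type*} {n : ℕ} (x : Fin n → A) : Multiset A :=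
  Multiset.map x Finset.univ.val

section Aux

variable {A : Type*} [Fintype A] [DecidableEq A] {n : ℕ}

/-- The set of controlled letter transpositions. -/
def cltSet (A : Type*) [DecidableEq A] (n : ℕ) : Set (Equiv.Perm (Fin n → A)) :=
  {σ : Equiv.Perm (Fin n → A) |
          ∃ (i j : Fin n) (a b : A) (w : ∀ k : Fin n, k ≠ i → k ≠ j → A),
            i ≠ j ∧ a ≠ b ∧
            σ = Equiv.swap
              (fun k => if h1 : k = i then a else if h2 : k = j then b else w k h1 h2)
              (fun k => if h1 : k = i then b else if h2 : k = j then a else w k h1 h2)}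

lemma wordWeight_comp (x : Fin n → A) (e : Equiv.Perm (Fin n)) :
    wordWeight (x ∘ e) = wordWeight x := by
  show Multiset.map (x ∘ e) Finset.univ.val = Multiset.map x Finset.univ.val
  rw [← Multiset.map_map]
  congr 1
  have h := congrArg Finset.val (Finset.map_univ_equiv e)
  simpa using h

lemma swap_comp_mem (y : Fin n → A) (i j : Fin n) (hij : i ≠ j) (hab : y i ≠ y j) :
    Equiv.swap y (y ∘ Equiv.swap i j) ∈ cltSet A n := by
  refine ⟨i, j, y i, y j, fun k _ _ => y k, hij, hab, ?_⟩
  congr 1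
  · funext k
    by_cases h1 : k = i
    · subst h1; simp
    · by_cases h2 : k = j
      · subst h2; simp [h1]
      · simp [h1, h2]
  · funext k
    by_cases h1 : k = i
    · subst h1; simp
    · by_cases h2 : k = j
      · subst h2; simp [h1]
      · simp [h1, h2, Equiv.swap_apply_of_ne_of_ne h1 h2]

lemma wordWeight_swap_apply {u v : Fin n → A} (h : wordWeight u = wordWeight v)
    (z : Fin n → A) : wordWeight (Equiv.swap u v z) = wordWeight z := by
  rcases eq_or_ne z u with rfl | hu
  · rw [Equiv.swap_apply_left]; exact h.symm
  rcases eq_or_ne z v with rfl | hv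
  · rw [Equiv.swap_apply_right]; exact h
  · rw [Equiv.swap_apply_of_ne_of_ne hu hv]

lemma cltSet_conservative {σ : Equiv.Perm (Fin n → A)} (hσ : σ ∈ cltSet A n)
    (z : Fin n → A) : wordWeight (σ z) = wordWeight z := by
  obtain ⟨i, j, a, b, w, hij, hab, rfl⟩ := hσ
  apply wordWeight_swap_apply
  have hv : (fun k => if h1 : k = i then b else if h2 : k = j then a else w k h1 h2)
      = (fun k => if h1 : k = i then a else if h2 : k = j then b else w k h1 h2)
        ∘ Equiv.swap i j := by
    funext k
    by_cases h1 : k = i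
    · subst h1; simp [hij, hij.symm]
    · by_cases h2 : k = j
      · subst h2; simp [h1]
      · simp [h1, h2, Equiv.swap_apply_of_ne_of_ne h1 h2]
  rw [hv, wordWeight_comp]

lemma swap_mem_closure_aux (d : ℕ) :
    ∀ x y : Fin n → A, (Finset.univ.filter fun k => x k ≠ y k).card ≤ d →
      wordWeight x = wordWeight y →
      Equiv.swap x y ∈ Subgroup.closure (cltSet A n) := by
  induction d with
  | zero =>
    intro x y hc _
    have hxy : x = y := by
      funext k
      by_contra hk
      have hm : k ∈ Finset.univ.filter fun k => x k ≠ y k := by simp [hk]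
      have := Finset.card_pos.mpr ⟨k, hm⟩
      omega
    subst hxy
    rw [Equiv.swap_self]
    exact Subgroup.one_mem _
  | succ d ih =>
    intro x y hc hw
    rcases eq_or_ne x y with rfl | hxy
    · rw [Equiv.swap_self]; exact Subgroup.one_mem _
    obtain ⟨i, hi⟩ : ∃ i, x i ≠ y i := by
      by_contra h; push_neg at h; exact hxy (funext h)
    -- the multisets of entries over the differing positions agree
    set M : Multiset (Fin n) := Multiset.filter (fun k => x k ≠ y k) Finset.univ.val with hM
    have hmap : Multiset.map x M = Multiset.map y M := by
      have h2 : Multiset.map x (Multiset.filter (fun k => ¬ x k ≠ y k) Finset.univ.val)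
          = Multiset.map y (Multiset.filter (fun k => ¬ x k ≠ y k) Finset.univ.val) := by
        refine Multiset.map_congr rfl (fun k hk => ?_)
        have := (Multiset.mem_filter.mp hk).2
        simpa using this
      have h1 : Multiset.map x M + Multiset.map x
            (Multiset.filter (fun k => ¬ x k ≠ y k) Finset.univ.val)
          = Multiset.map y M + Multiset.map y
            (Multiset.filter (fun k => ¬ x k ≠ y k) Finset.univ.val) := by
        rw [← Multiset.map_add, ← Multiset.map_add, hM, Multiset.filter_add_not]
        exact hw
      rw [h2] at h1
      exact add_right_cancel h1
    have hxiM : x i ∈ Multiset.map y M := by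
      rw [← hmap]
      exact Multiset.mem_map.mpr ⟨i, Multiset.mem_filter.mpr ⟨by simp, hi⟩, rfl⟩
    obtain ⟨j, hjM, hyj⟩ := Multiset.mem_map.mp hxiM
    have hji : x j ≠ y j := (Multiset.mem_filter.mp hjM).2
    have hij : i ≠ j := by rintro rfl; exact hi hyj.symm
    have hyy : y i ≠ y j := by rw [hyj]; exact fun h => hi h.symm
    set z := y ∘ Equiv.swap i j with hz
    have hswapS : Equiv.swap y z ∈ cltSet A n := swap_comp_mem y i j hij hyy
    have hzw : wordWeight z = wordWeight y := wordWeight_comp y _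
    have hzi : z i = x i := by
      show y (Equiv.swap i j i) = x i
      rw [Equiv.swap_apply_left]; exact hyj
    have hsub : (Finset.univ.filter fun k => x k ≠ z k)
        ⊆ (Finset.univ.filter fun k => x k ≠ y k).erase i := by
      intro k hk
      rw [Finset.mem_filter] at hk
      rw [Finset.mem_erase, Finset.mem_filter]
      have hzk := hk.2
      by_cases h1 : k = i
      · exact absurd hzi.symm (h1 ▸ hzk)
      · refine ⟨h1, Finset.mem_univ _, ?_⟩
        by_cases h2 : k = j
        · subst h2; exact hji
        · intro he
          apply hzk
          show x k = y (Equiv.swap i j k)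
          rw [Equiv.swap_apply_of_ne_of_ne h1 h2]; exact he
    have hcard : (Finset.univ.filter fun k => x k ≠ z k).card ≤ d := by
      have h1 := Finset.card_le_card hsub
      have h2 : i ∈ (Finset.univ.filter fun k => x k ≠ y k) := by simp [hi]
      have h3 := Finset.card_erase_of_mem h2
      have h4 := Finset.card_pos.mpr ⟨i, h2⟩
      omega
    rcases eq_or_ne x z with rfl | hxz
    · rw [Equiv.swap_comm]
      exact Subgroup.subset_closure hswapS
    · have h1 : Equiv.swap x z ∈ Subgroup.closure (cltSet A n) :=
        ih x z hcard (hw.trans hzw.symm)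
      have h2 : Equiv.swap y z ∈ Subgroup.closure (cltSet A n) :=
        Subgroup.subset_closure hswapS
      have hyz : y ≠ z := by
        intro h
        apply hyy
        rw [hyj, ← hzi, ← h]
      have key : Equiv.swap y z * Equiv.swap x z * Equiv.swap y z = Equiv.swap x y := by
        apply Equiv.ext
        intro w
        simp only [Equiv.Perm.mul_apply]
        rcases eq_or_ne w x with rfl | hwx
        · rw [Equiv.swap_apply_of_ne_of_ne hxy hxz, Equiv.swap_apply_left,
            Equiv.swap_apply_right, Equiv.swap_apply_left]
        rcases eq_or_ne w y with rfl | hwy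
        · rw [Equiv.swap_apply_left, Equiv.swap_apply_right,
            Equiv.swap_apply_of_ne_of_ne hxy hxz, Equiv.swap_apply_right]
        rcases eq_or_ne w z with rfl | hwz
        · rw [Equiv.swap_apply_right, Equiv.swap_apply_of_ne_of_ne (Ne.symm hxy)
            hyz, Equiv.swap_apply_left,
            Equiv.swap_apply_of_ne_of_ne (Ne.symm hxz) (Ne.symm hyz)]
        · rw [Equiv.swap_apply_of_ne_of_ne hwy hwz,
            Equiv.swap_apply_of_ne_of_ne hwx hwz,
            Equiv.swap_apply_of_ne_of_ne hwy hwz,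
            Equiv.swap_apply_of_ne_of_ne hwx hwy]
      rw [← key]
      exact mul_mem (mul_mem h2 h1) h2

lemma conservative_mem_closure :
    ∀ (d : ℕ) (g : Equiv.Perm (Fin n → A)), g.support.card ≤ d →
      (∀ x, wordWeight (g x) = wordWeight x) →
      g ∈ Subgroup.closure (cltSet A n) := by
  intro d
  induction d with
  | zero =>
    intro g hg _
    have : g = 1 := Equiv.Perm.card_support_eq_zero.mp (Nat.le_zero.mp hg)
    rw [this]; exact Subgroup.one_mem _
  | succ d ih =>
    intro g hg hcons
    rcases eq_or_ne g 1 with rfl | hg1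
    · exact Subgroup.one_mem _
    obtain ⟨x, hx⟩ : ∃ x, g x ≠ x := by
      by_contra h; push_neg at h; exact hg1 (Equiv.ext h)
    have hτ : Equiv.swap x (g x) ∈ Subgroup.closure (cltSet A n) :=
      swap_mem_closure_aux (Finset.univ.filter fun k => x k ≠ g x k).card x (g x)
        le_rfl (hcons x).symm
    have hsup := Equiv.Perm.card_support_swap_mul hx
    have hcons' : ∀ z, wordWeight ((Equiv.swap x (g x) * g) z) = wordWeight z := by
      intro z
      show wordWeight (Equiv.swap x (g x) (g z)) = wordWeight z
      rw [wordWeight_swap_apply (hcons x).symm]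
      exact hcons z
    have hg' : Equiv.swap x (g x) * g ∈ Subgroup.closure (cltSet A n) :=
      ih _ (by omega) hcons'
    have hgeq : g = Equiv.swap x (g x) * (Equiv.swap x (g x) * g) := by
      rw [← mul_assoc, Equiv.swap_mul_self, one_mul]
    rw [hgeq]
    exact mul_mem hτ hg'

/-- The conservative permutations form a subgroup. -/
def conservativeSubgroup (A : Type*) [Fintype A] [DecidableEq A] (n : ℕ) :
    Subgroup (Equiv.Perm (Fin n → A)) where
  carrier := {g | ∀ x, wordWeight (g x) = wordWeight x}
  one_mem' := fun _ => rfl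
  mul_mem' := fun {a b} ha hb x => (ha (b x)).trans (hb x)
  inv_mem' := fun {a} ha x => by
    have h := ha (a⁻¹ x)
    rw [← Equiv.Perm.mul_apply, mul_inv_cancel, Equiv.Perm.one_apply] at h
    exact h.symm

end Aux

/-- **Controlled letter transpositions generate the conservative group.**
Let `A` be a finite type and `n ≥ 2`.  For distinct coordinates `i ≠ j` in `Fin n`,
distinct symbols `a ≠ b` in `A` and an assignment `w` of a symbol to every coordinate
outside `{i, j}`, the controlled letter transposition determined by `(i, j, a, b, w)`
exchanges the word equal to `w` outside `{i,j}` with values `a` at `i` and `b` at `j`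
with the word equal to `w` outside `{i,j}` with values `b` at `i` and `a` at `j`,
fixing all other words.  A permutation of `Fin n → A` lies in the subgroup generated
by all controlled letter transpositions if and only if it is conservative, i.e. it
preserves the multiset of entries of every word. -/
theorem controlledLetterTranspositions_generate_conservative
    {A : Type*} [Fintype A] [DecidableEq A] (n : ℕ) (hn : 2 ≤ n)
    (g : Equiv.Perm (Fin n → A)) :
    g ∈ Subgroup.closure
        {σ : Equiv.Perm (Fin n → A) |
          ∃ (i j : Fin n) (a b : A) (w : ∀ k : Fin n, k ≠ i → k ≠ j → A),
            i ≠ j ∧ a ≠ b ∧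
            σ = Equiv.swap
              (fun k => if h1 : k = i then a else if h2 : k = j then b else w k h1 h2)
              (fun k => if h1 : k = i then b else if h2 : k = j then a else w k h1 h2)} ↔
      ∀ x : Fin n → A, wordWeight (g x) = wordWeight x := by
  constructor
  · intro hg
    exact (Subgroup.closure_le (conservativeSubgroup A n)).mpr
      (fun σ hσ => cltSet_conservative hσ) hg
  · intro hcons
    exact conservative_mem_closure g.support.card g le_rfl hcons
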